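/- Let m ≥ 1 be an integer and γ_{-m}, …, γ_m real numbers satisfying the critical equations. Then the coefficients are antisymmetric: γ_{-i} = −γ_i for every i with 0 ≤ i ≤ m; in particular γ_0 = 0. -/

import Mathlib

open Real Finset

/-- The first-order optimality (critical) equations for the DRP dispersion error. -/
def DRPCritical (m : ℕ) (γ : ℤ → ℝ) : Prop :=
  ∀ i ∈ Finset.Icc (-(m : ℤ)) (m : ℤ),
    (∫ ζ in (0 : ℝ)..(π / 2),
      (-ζ * Real.sin ((i : ℝ) * ζ) +
        ∑ k ∈ Finset.Icc (-(m : ℤ)) (m : ℤ), γ k * Real.cos (((k : ℝ) - (i : ℝ)) * ζ))) = 0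

namespace DRPaux

/-- Continuity helper. -/
lemma contSum (c : ℤ → ℝ) (d : ℤ → ℝ) (S : Finset ℤ) :
    Continuous fun ζ : ℝ => ∑ k ∈ S, c k * Real.cos (d k * ζ) :=
  continuous_finset_sum _ fun k _ =>
    continuous_const.mul (Real.continuous_cos.comp (continuous_const.mul continuous_id))

lemma contCos (d : ℝ) : Continuous fun ζ : ℝ => Real.cos (d * ζ) :=
  Real.continuous_cos.comp (continuous_const.mul continuous_id)

/-- `∫_0^{2π} cos (n x) dx`. -/
lemma cosInt (n : ℤ) :
    ∫ x in (0 : ℝ)..(2 * π), Real.cos ((n : ℝ) * x) = if n = 0 then 2 * π else 0 := by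
  by_cases h : n = 0
  · simp [h]
  · have hc : (n : ℝ) ≠ 0 := Int.cast_ne_zero.mpr h
    rw [intervalIntegral.integral_comp_mul_left (fun x => Real.cos x) hc]
    have hs : Real.sin ((n : ℝ) * (2 * π)) = 0 := by
      have := Real.sin_int_mul_pi (2 * n)
      push_cast at this
      rw [show (n : ℝ) * (2 * π) = (2 * n : ℝ) * π by ring]
      push_cast; exact this
    simp [integral_cos, hs, h]

/-- Orthogonality of integer cosines on `[0, 2π]`. -/
lemma cosOrtho (a b : ℤ) :
    ∫ x in (0 : ℝ)..(2 * π), Real.cos ((a : ℝ) * x) * Real.cos ((b : ℝ) * x)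
      = π * ((if a = b then (1 : ℝ) else 0) + (if a = -b then (1 : ℝ) else 0)) := by
  have h : ∀ x : ℝ, Real.cos ((a : ℝ) * x) * Real.cos ((b : ℝ) * x)
      = (Real.cos (((a - b : ℤ) : ℝ) * x) + Real.cos (((a + b : ℤ) : ℝ) * x)) / 2 := by
    intro x
    push_cast
    rw [sub_mul, add_mul, Real.cos_sub, Real.cos_add]
    ring
  have hint : ∀ c : ℤ, IntervalIntegrable (fun x => Real.cos ((c : ℝ) * x)) MeasureTheory.volume
      (0 : ℝ) (2 * π) := fun c => (contCos _).intervalIntegrable _ _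
  calc ∫ x in (0 : ℝ)..(2 * π), Real.cos ((a : ℝ) * x) * Real.cos ((b : ℝ) * x)
      = ∫ x in (0 : ℝ)..(2 * π),
          (Real.cos (((a - b : ℤ) : ℝ) * x) + Real.cos (((a + b : ℤ) : ℝ) * x)) / 2 := by
        exact intervalIntegral.integral_congr fun x _ => h x
    _ = ((∫ x in (0 : ℝ)..(2 * π), Real.cos (((a - b : ℤ) : ℝ) * x))
          + ∫ x in (0 : ℝ)..(2 * π), Real.cos (((a + b : ℤ) : ℝ) * x)) / 2 := by
        rw [intervalIntegral.integral_div, intervalIntegral.integral_add (hint _) (hint _)]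
    _ = ((if a - b = 0 then 2 * π else 0) + (if a + b = 0 then 2 * π else 0)) / 2 := by
        rw [cosInt, cosInt]
    _ = π * ((if a = b then (1 : ℝ) else 0) + (if a = -b then (1 : ℝ) else 0)) := by
        simp only [sub_eq_zero, add_eq_zero_iff_eq_neg]
        split_ifs <;> ring

/-- Steps A–C : the cosine part of the stencil vanishes identically. -/
lemma vanish (m : ℕ) (γ : ℤ → ℝ) (hγ : DRPCritical m γ) (ζ : ℝ) :
    ∑ k ∈ Finset.Icc (-(m : ℤ)) (m : ℤ), γ k * Real.cos ((k : ℝ) * ζ) = 0 := by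
  set S := Finset.Icc (-(m : ℤ)) (m : ℤ) with hS
  set f : ℝ → ℝ := fun ζ => ∑ k ∈ S, γ k * Real.cos ((k : ℝ) * ζ) with hf
  have hfc : Continuous f := contSum _ _ _
  -- Step A : orthogonality of f against each cos(iζ) on [0, π/2]
  have hA : ∀ i ∈ S, ∫ t in (0 : ℝ)..(π / 2), f t * Real.cos ((i : ℝ) * t) = 0 := by
    intro i hi
    have hi' : -i ∈ S := by simp only [hS, Finset.mem_Icc] at hi ⊢; omega
    have h1 := hγ i hi
    have h2 := hγ (-i) hi'
    have hint : ∀ j : ℤ, IntervalIntegrable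
        (fun t : ℝ => -t * Real.sin ((j : ℝ) * t) +
          ∑ k ∈ S, γ k * Real.cos (((k : ℝ) - (j : ℝ)) * t)) MeasureTheory.volume (0 : ℝ) (π / 2) := by
      intro j
      apply Continuous.intervalIntegrable
      have c1 : Continuous fun t : ℝ => -t * Real.sin ((j : ℝ) * t) :=
        (continuous_neg.comp continuous_id).mul
          (Real.continuous_sin.comp (continuous_const.mul continuous_id))
      have c2 : Continuous fun t : ℝ => ∑ k ∈ S, γ k * Real.cos (((k : ℝ) - (j : ℝ)) * t) :=
        contSum γ (fun k => (k : ℝ) - (j : ℝ)) S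
      exact c1.add c2
    have key : ∫ t in (0 : ℝ)..(π / 2),
        ((-t * Real.sin ((i : ℝ) * t) +
            ∑ k ∈ S, γ k * Real.cos (((k : ℝ) - (i : ℝ)) * t)) +
          (-t * Real.sin (((-i : ℤ) : ℝ) * t) +
            ∑ k ∈ S, γ k * Real.cos (((k : ℝ) - ((-i : ℤ) : ℝ)) * t))) = 0 := by
      rw [intervalIntegral.integral_add (hint i) (hint (-i)), h1, h2, add_zero]
    have hpt : ∀ t : ℝ,
        ((-t * Real.sin ((i : ℝ) * t) +
            ∑ k ∈ S, γ k * Real.cos (((k : ℝ) - (i : ℝ)) * t)) +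
          (-t * Real.sin (((-i : ℤ) : ℝ) * t) +
            ∑ k ∈ S, γ k * Real.cos (((k : ℝ) - ((-i : ℤ) : ℝ)) * t)))
        = 2 * (f t * Real.cos ((i : ℝ) * t)) := by
      intro t
      have hsin : Real.sin (((-i : ℤ) : ℝ) * t) = -Real.sin ((i : ℝ) * t) := by
        push_cast; rw [neg_mul, Real.sin_neg]
      have hterm : ∀ k : ℤ,
          γ k * Real.cos (((k : ℝ) - (i : ℝ)) * t) +
            γ k * Real.cos (((k : ℝ) - ((-i : ℤ) : ℝ)) * t)
          = 2 * (γ k * Real.cos ((k : ℝ) * t) * Real.cos ((i : ℝ) * t)) := by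
        intro k
        push_cast
        rw [sub_neg_eq_add, sub_mul, add_mul, Real.cos_sub, Real.cos_add]
        ring
      have hsums : (∑ k ∈ S, γ k * Real.cos (((k : ℝ) - (i : ℝ)) * t)) +
          (∑ k ∈ S, γ k * Real.cos (((k : ℝ) - ((-i : ℤ) : ℝ)) * t))
          = 2 * (f t * Real.cos ((i : ℝ) * t)) := by
        rw [← Finset.sum_add_distrib]
        have : f t * Real.cos ((i : ℝ) * t)
            = ∑ k ∈ S, γ k * Real.cos ((k : ℝ) * t) * Real.cos ((i : ℝ) * t) := by
          rw [hf]; exact Finset.sum_mul _ _ _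
        rw [this, Finset.mul_sum]
        exact Finset.sum_congr rfl fun k _ => hterm k
      rw [hsin, ← hsums]
      ring
    have h2int : ∫ t in (0 : ℝ)..(π / 2), 2 * (f t * Real.cos ((i : ℝ) * t)) = 0 := by
      rw [show (∫ t in (0 : ℝ)..(π / 2), 2 * (f t * Real.cos ((i : ℝ) * t)))
          = ∫ t in (0 : ℝ)..(π / 2),
            ((-t * Real.sin ((i : ℝ) * t) +
                ∑ k ∈ S, γ k * Real.cos (((k : ℝ) - (i : ℝ)) * t)) +
              (-t * Real.sin (((-i : ℤ) : ℝ) * t) +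
                ∑ k ∈ S, γ k * Real.cos (((k : ℝ) - ((-i : ℤ) : ℝ)) * t)))
          from intervalIntegral.integral_congr fun t _ => (hpt t).symm]
      exact key
    rw [intervalIntegral.integral_const_mul] at h2int
    linarith
  -- Step B : ∫ f² = 0 on [0, π/2], hence f vanishes on (0, π/2]
  have hsq : ∫ t in (0 : ℝ)..(π / 2), f t * f t = 0 := by
    have hpt : ∀ t : ℝ, f t * f t = ∑ i ∈ S, γ i * (f t * Real.cos ((i : ℝ) * t)) := by
      intro t
      calc f t * f t = f t * ∑ i ∈ S, γ i * Real.cos ((i : ℝ) * t) := by rw [hf]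
        _ = ∑ i ∈ S, γ i * (f t * Real.cos ((i : ℝ) * t)) := by
            rw [Finset.mul_sum]; exact Finset.sum_congr rfl fun i _ => by ring
    rw [intervalIntegral.integral_congr (fun t _ => hpt t),
      intervalIntegral.integral_finset_sum (f := fun i t => γ i * (f t * Real.cos ((i : ℝ) * t))) (fun i _ =>
        ((continuous_const.mul (hfc.mul (contCos _))).intervalIntegrable _ _))]
    exact Finset.sum_eq_zero fun i hi => by
      rw [intervalIntegral.integral_const_mul, hA i hi, mul_zero]
  have hpi2 : (0 : ℝ) < π / 2 := by positivity
  have hfz : ∀ t ∈ Set.Ioc (0 : ℝ) (π / 2), f t = 0 := by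
    have hae : (fun t => f t * f t) =ᵐ[MeasureTheory.volume.restrict (Set.Ioc 0 (π / 2))]
        (0 : ℝ → ℝ) := by
      refine (intervalIntegral.integral_eq_zero_iff_of_le_of_nonneg_ae hpi2.le ?_ ?_).1 hsq
      · exact Filter.Eventually.of_forall fun t => mul_self_nonneg _
      · exact ((hfc.mul hfc).intervalIntegrable _ _)
    have heq : Set.EqOn (fun t => f t * f t) (0 : ℝ → ℝ) (Set.Ioc 0 (π / 2)) :=
      MeasureTheory.Measure.eqOn_Ioc_of_ae_eq MeasureTheory.volume hae ((hfc.mul hfc).continuousOn)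
        continuousOn_const
    intro t ht
    have := heq ht
    simpa [mul_self_eq_zero] using this
  -- Step C : Chebyshev argument, f vanishes everywhere
  set g : Polynomial ℝ := ∑ k ∈ S, γ k • Polynomial.Chebyshev.T ℝ k with hg
  have heval : ∀ t : ℝ, g.eval (Real.cos t) = f t := by
    intro t
    rw [hg, Polynomial.eval_finset_sum, hf]
    exact Finset.sum_congr rfl fun k _ => by
      rw [Polynomial.eval_smul, smul_eq_mul, Polynomial.Chebyshev.T_real_cos]
  have hg0 : g = 0 := by
    apply Polynomial.eq_zero_of_infinite_isRoot
    have hsub : Real.cos '' Set.Ioc (0 : ℝ) (π / 2) ⊆ {x | g.IsRoot x} := by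
      rintro x ⟨t, ht, rfl⟩
      simpa [Polynomial.IsRoot, heval t] using hfz t ht
    refine Set.Infinite.mono hsub ?_
    refine Set.Infinite.image ?_ (Set.Ioc_infinite hpi2)
    exact Real.injOn_cos.mono (Set.Ioc_subset_Icc_self.trans
      (Set.Icc_subset_Icc le_rfl (by linarith [Real.pi_pos])))
  have : f ζ = 0 := by rw [← heval ζ, hg0, Polynomial.eval_zero]
  simpa [hf] using this

end DRPaux

theorem stmt_7 (m : ℕ) (hm : 1 ≤ m) (γ : ℤ → ℝ) (hγ : DRPCritical m γ) :
    (∀ i : ℤ, 0 ≤ i → i ≤ (m : ℤ) → γ (-i) = -γ i) ∧ γ 0 = 0 := by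
  set S := Finset.Icc (-(m : ℤ)) (m : ℤ) with hS
  have hvan := DRPaux.vanish m γ hγ
  -- Step D : orthogonality on [0, 2π] extracts the antisymmetry
  have hmain : ∀ i : ℤ, 0 ≤ i → i ≤ (m : ℤ) → γ (-i) = -γ i := by
    intro i hi0 him
    have hiS : i ∈ S := by simp only [hS, Finset.mem_Icc]; omega
    have hiS' : -i ∈ S := by simp only [hS, Finset.mem_Icc]; omega
    have hzero : ∫ t in (0 : ℝ)..(2 * π),
        (∑ k ∈ S, γ k * Real.cos ((k : ℝ) * t)) * Real.cos ((i : ℝ) * t) = 0 := by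
      have : ∀ t : ℝ, (∑ k ∈ S, γ k * Real.cos ((k : ℝ) * t)) * Real.cos ((i : ℝ) * t)
          = 0 := fun t => by rw [hvan t, zero_mul]
      rw [intervalIntegral.integral_congr fun t _ => this t]
      simp
    have hexpand : ∫ t in (0 : ℝ)..(2 * π),
        (∑ k ∈ S, γ k * Real.cos ((k : ℝ) * t)) * Real.cos ((i : ℝ) * t)
        = ∑ k ∈ S, γ k * (π * ((if k = i then (1 : ℝ) else 0) +
            (if k = -i then (1 : ℝ) else 0))) := by
      have hpt : ∀ t : ℝ, (∑ k ∈ S, γ k * Real.cos ((k : ℝ) * t)) * Real.cos ((i : ℝ) * t)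
          = ∑ k ∈ S, γ k * (Real.cos ((k : ℝ) * t) * Real.cos ((i : ℝ) * t)) := by
        intro t; rw [Finset.sum_mul]; exact Finset.sum_congr rfl fun k _ => by ring
      rw [intervalIntegral.integral_congr fun t _ => hpt t,
        intervalIntegral.integral_finset_sum
          (f := fun k t => γ k * (Real.cos ((k : ℝ) * t) * Real.cos ((i : ℝ) * t))) (fun k _ =>
          ((continuous_const.mul ((DRPaux.contCos _).mul
            (DRPaux.contCos _))).intervalIntegrable _ _))]
      exact Finset.sum_congr rfl fun k _ => by
        rw [intervalIntegral.integral_const_mul, DRPaux.cosOrtho k i]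
    have hsum : ∑ k ∈ S, γ k * (π * ((if k = i then (1 : ℝ) else 0) +
        (if k = -i then (1 : ℝ) else 0))) = π * γ i + π * γ (-i) := by
      have expand : ∀ k ∈ S, γ k * (π * ((if k = i then (1 : ℝ) else 0) +
          (if k = -i then (1 : ℝ) else 0)))
          = (if k = i then π * γ k else 0) + (if k = -i then π * γ k else 0) := by
        intro k _; split_ifs <;> ring
      rw [Finset.sum_congr rfl expand, Finset.sum_add_distrib,
        Finset.sum_ite_eq' S i (fun k => π * γ k),
        Finset.sum_ite_eq' S (-i) (fun k => π * γ k), if_pos hiS, if_pos hiS']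
    have : π * γ i + π * γ (-i) = 0 := by rw [← hsum, ← hexpand, hzero]
    have hπ := Real.pi_pos
    have : γ i + γ (-i) = 0 := by
      have h := this
      nlinarith [Real.pi_pos]
    linarith
  refine ⟨hmain, ?_⟩
  have h0 := hmain 0 le_rfl (by exact_mod_cast Nat.zero_le m)
  simp only [neg_zero] at h0
  linarith
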